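/- For a single delay process with counter domain [0,C] receiving tokens at a rate of at most one per C+1 rounds, if at some time t the state satisfies r = 0 ∧ c = 0, then r = 0 holds at the start of every subsequent round (the resting bound is zero forever after). -/
import Mathlib


/-- One step of a single delay process with counter domain `[0,C]`:
absorb a (possible) arrival into `r`; then release a token when
`c = 0 ∧ r > 0` (resetting `c ← C`), otherwise decrement `c` when positive.
State is `(r, c) : ℕ × ℕ`. -/
def dstep (C : ℕ) (arr : Bool) (s : ℕ × ℕ) : ℕ × ℕ :=
  let r' := s.1 + (if arr then 1 else 0)
  if s.2 = 0 ∧ 0 < r' then (r' - 1, C) else (r', s.2 - 1)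

/-- Trajectory of the delay process from initial state `σ` under arrival
sequence `a`. -/
def traj (C : ℕ) (a : ℕ → Bool) (σ : ℕ × ℕ) : ℕ → ℕ × ℕ
  | 0 => σ
  | t + 1 => dstep C (a t) (traj C a σ t)

/-- If arrivals are separated by at least `C+1` rounds and at some time `t`
the delay process satisfies `r = 0 ∧ c = 0`, then `r = 0` holds at the start
of every subsequent round: the resting bound is zero forever after. -/
theorem stmt_4 (C : ℕ) (a : ℕ → Bool)
    (hgap : ∀ t t' : ℕ, t < t' → a t = true → a t' = true → C + 1 ≤ t' - t)
    (σ : ℕ × ℕ) (t : ℕ)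
    (ht : (traj C a σ t).1 = 0 ∧ (traj C a σ t).2 = 0) :
    ∀ t' : ℕ, t ≤ t' → (traj C a σ t').1 = 0 := by
  have key : ∀ t', t ≤ t' → (traj C a σ t').1 = 0 ∧
      (∀ s, t' ≤ s → s < t' + (traj C a σ t').2 → a s = false) := by
    intro t' h
    induction t', h using Nat.le_induction with
    | base =>
      refine ⟨ht.1, fun s hs hs' => ?_⟩
      rw [ht.2] at hs'; omega
    | succ n hn ih =>
      obtain ⟨hr, hc⟩ := ih
      show (dstep C (a n) (traj C a σ n)).1 = 0 ∧
        (∀ s, n + 1 ≤ s → s < n + 1 + (dstep C (a n) (traj C a σ n)).2 → a s = false)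
      unfold dstep
      cases ha : a n with
      | false =>
        simp only [if_neg, hr]
        have : ¬ ((traj C a σ n).2 = 0 ∧ 0 < 0 + (if false = true then 1 else 0)) := by
          simp
        rw [if_neg this]
        refine ⟨rfl, fun s hs hs' => ?_⟩
        exact hc s (by omega) (by omega)
      | true =>
        have hc0 : (traj C a σ n).2 = 0 := by
          by_contra h0
          have := hc n (le_refl n) (by omega)
          rw [ha] at this; exact absurd this (by simp)
        rw [hr]
        have hcond : ((traj C a σ n).2 = 0 ∧ 0 < 0 + (if true = true then 1 else 0)) := by
          simp [hc0]
        rw [if_pos hcond]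
        refine ⟨by simp, fun s hs hs' => ?_⟩
        by_contra hs''
        have has : a s = true := by simpa using hs''
        have := hgap n s (by omega) ha has
        simp at hs'
        omega
  exact fun t' h => (key t' h).1
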